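/- Independence of Lie-cocycle coefficients: if ω^J(C) form a basis of H*(g,k) (represented by invariant cocycles) and a_J ∈ P^g are invariants such that Σ_J a_J ω^J is γ-exact in P ⊗ Λg*, then each a_J = 0, assuming P is a semisimple g-module and g is reductive over a characteristic-zero field. -/

import Mathlib

theorem CE_aux_sum_apply {R : Type*} [Semiring R] {M N : Type*} [AddCommMonoid M]
    [Module R M] [AddCommMonoid N] [Module R N] {ι : Type*} {α : Type*}
    (s : Finset α) (F : α → (M [⋀^ι]→ₗ[R] N)) (v : ι → M) :
    (∑ i ∈ s, F i) v = ∑ i ∈ s, F i v := by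
  induction s using Finset.cons_induction with
  | empty => simp
  | cons a s ha ih => simp [Finset.sum_cons, ih]



/-- Independence of Lie-cocycle coefficients.  Same Chevalley–Eilenberg setup as for the
structure theorem: `g` finite-dimensional reductive over a field `k` of characteristic
zero, acting by derivations on a commutative algebra `P` which is semisimple as a
`g`-module.  If the `ω_J` are trivial-coefficient cocycles whose classes in `H*(g,k)`
are linearly independent, and `a_J ∈ P^g` are invariants such that `Σ_J a_J • ω_J` is a
coboundary (is zero, in degree 0) in the `P`-valued complex, then every `a_J = 0`:
the map `P^g ⊗ H*(g,k) → H*(g,P)` is injective. -/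
theorem CE_invariant_coefficients_independence
    (k : Type*) [Field k] [CharZero k]
    (g : Type*) [LieRing g] [LieAlgebra k g] [FiniteDimensional k g]
    (P : Type*) [CommRing P] [Algebra k P] [LieRingModule g P] [LieModule k g P]
    (hred : ∀ I : LieIdeal k g, ∃ I' : LieIdeal k g, IsCompl I I')
    (hder : ∀ (X : g) (a b : P), ⁅X, a * b⁆ = ⁅X, a⁆ * b + a * ⁅X, b⁆)
    (hss : ∀ Q : LieSubmodule k g P, ∃ Q' : LieSubmodule k g P, IsCompl Q Q')
    (D : ∀ q : ℕ, (g [⋀^Fin q]→ₗ[k] P) → (g [⋀^Fin (q + 1)]→ₗ[k] P))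
    (hD : ∀ (q : ℕ) (c : g [⋀^Fin q]→ₗ[k] P) (x : Fin (q + 1) → g),
      D q c x =
        (∑ i : Fin (q + 1), ((-1 : k) ^ (i : ℕ)) • ⁅x i, c (i.removeNth x)⁆) +
        ∑ j : Fin (q + 1), ∑ i ∈ Finset.Iio j,
          ((-1 : k) ^ (j : ℕ)) •
            c (j.removeNth (Function.update x i ⁅x i, x j⁆)))
    (Dtriv : ∀ q : ℕ, (g [⋀^Fin q]→ₗ[k] k) → (g [⋀^Fin (q + 1)]→ₗ[k] k))
    (hDtriv : ∀ (q : ℕ) (ω : g [⋀^Fin q]→ₗ[k] k) (x : Fin (q + 1) → g),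
      Dtriv q ω x =
        ∑ j : Fin (q + 1), ∑ i ∈ Finset.Iio j,
          ((-1 : k) ^ (j : ℕ)) •
            ω (j.removeNth (Function.update x i ⁅x i, x j⁆))) :
    -- degree 0 case: `γ`-exact means zero, independence means linear independence:
    (∀ (nJ : ℕ) (a : Fin nJ → P) (ω : Fin nJ → (g [⋀^Fin 0]→ₗ[k] k)),
      (∀ J (X : g), ⁅X, a J⁆ = 0) →
      (∀ J, Dtriv 0 (ω J) = 0) →
      (∀ coef : Fin nJ → k, ∑ J, coef J • ω J = 0 → ∀ J, coef J = 0) →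
      (∑ J, (LinearMap.toSpanSingleton k P (a J)).compAlternatingMap (ω J)) = 0 →
      ∀ J, a J = 0) ∧
    -- positive degree case:
    (∀ (q nJ : ℕ) (a : Fin nJ → P) (ω : Fin nJ → (g [⋀^Fin (q + 1)]→ₗ[k] k)),
      (∀ J (X : g), ⁅X, a J⁆ = 0) →
      (∀ J, Dtriv (q + 1) (ω J) = 0) →
      -- the classes of the `ω_J` in `H^{q+1}(g,k)` are linearly independent:
      (∀ coef : Fin nJ → k,
        (∃ β : g [⋀^Fin q]→ₗ[k] k, ∑ J, coef J • ω J = Dtriv q β) →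
        ∀ J, coef J = 0) →
      -- `Σ_J a_J • ω_J` is `γ`-exact in the `P`-valued complex:
      (∃ b : g [⋀^Fin q]→ₗ[k] P,
        (∑ J, (LinearMap.toSpanSingleton k P (a J)).compAlternatingMap (ω J))
          = D q b) →
      ∀ J, a J = 0) := by
  constructor
  · -- degree 0
    intro nJ a ω hinv hcoc hindep hsum J
    rw [← Module.forall_dual_apply_eq_zero_iff k]
    intro f
    refine hindep (fun J => f (a J)) ?_ J
    ext v
    have hv := congrArg (fun F : g [⋀^Fin 0]→ₗ[k] P => f (F v)) hsum
    simp only [CE_aux_sum_apply, LinearMap.compAlternatingMap_apply,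
      LinearMap.toSpanSingleton_apply, AlternatingMap.zero_apply, map_zero, map_sum,
      map_smul] at hv
    rw [CE_aux_sum_apply]
    simp only [AlternatingMap.smul_apply, AlternatingMap.zero_apply]
    rw [← hv]
    exact Finset.sum_congr rfl fun i _ => by rw [smul_eq_mul, smul_eq_mul, mul_comm]
  · -- positive degree
    intro q nJ a ω hinv hcoc hindep hb J
    obtain ⟨b, hb⟩ := hb
    set N : LieSubmodule k g P := LieModule.maxTrivSubmodule k g P with hN
    obtain ⟨Q', hQ'⟩ := hss N
    have hc : IsCompl (N : Submodule k P) (Q' : Submodule k P) :=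
      LieSubmodule.isCompl_toSubmodule.mpr hQ'
    set πP : P →ₗ[k] P :=
      (N : Submodule k P).subtype ∘ₗ Submodule.projectionOnto _ _ hc with hπP
    have hπ_inv : ∀ p ∈ N, πP p = p := by
      intro p hp
      simp only [hπP, LinearMap.comp_apply]
      rw [Submodule.projectionOnto_apply_left hc ⟨p, hp⟩]
      rfl
    have hπ_bracket : ∀ (X : g) (p : P), πP ⁅X, p⁆ = 0 := by
      intro X p
      obtain ⟨u, hu, v, hv, rfl⟩ := Submodule.mem_sup.mp
        (show p ∈ (N : Submodule k P) ⊔ (Q' : Submodule k P) by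
          rw [hc.sup_eq_top]; trivial)
      have hbu : ⁅X, u⁆ = 0 := (LieModule.mem_maxTrivSubmodule k g P u).mp hu X
      have hbv : ⁅X, v⁆ ∈ Q' := Q'.lie_mem hv
      rw [lie_add, hbu, zero_add]
      simp only [hπP, LinearMap.comp_apply]
      rw [Submodule.projectionOnto_apply_of_mem_right hc hbv]
      simp
    rw [← Module.forall_dual_apply_eq_zero_iff k]
    intro f
    set φ : P →ₗ[k] k := f ∘ₗ πP with hφ
    have hφa : ∀ J, φ (a J) = f (a J) := by
      intro J
      simp only [hφ, LinearMap.comp_apply]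
      rw [hπ_inv (a J) ((LieModule.mem_maxTrivSubmodule k g P (a J)).mpr (hinv J))]
    have hφbr : ∀ (X : g) (p : P), φ ⁅X, p⁆ = 0 := by
      intro X p; simp only [hφ, LinearMap.comp_apply, hπ_bracket X p, map_zero]
    refine hindep (fun J => f (a J)) ⟨φ.compAlternatingMap b, ?_⟩ J
    ext x
    have hx : φ ((∑ J, (LinearMap.toSpanSingleton k P (a J)).compAlternatingMap (ω J)) x)
        = φ (D q b x) := by rw [hb]
    rw [hD] at hx
    simp only [CE_aux_sum_apply, LinearMap.compAlternatingMap_apply,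
      LinearMap.toSpanSingleton_apply, map_add, map_sum, map_smul, hφbr, smul_zero,
      Finset.sum_const_zero, zero_add, hφa] at hx
    rw [CE_aux_sum_apply]
    simp only [AlternatingMap.smul_apply]
    rw [hDtriv]
    simp only [LinearMap.compAlternatingMap_apply]
    rw [← hx]
    exact Finset.sum_congr rfl fun i _ => by rw [smul_eq_mul, smul_eq_mul, mul_comm]
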